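/- Let P and Q be probability measures on a measurable space 𝒴 with P ≪ Q and χ²(P‖Q) := ∫ (dP/dQ − 1)² dQ < ∞, and let μ₀ be a probability measure on a measurable space Ω₀. Then for every n ≥ 0 and every measurable set E ⊆ Ω₀ × 𝒴ⁿ, (μ₀ ⊗ P^{⊗n})(E) ≤ √((μ₀ ⊗ Q^{⊗n})(E)) · (1 + χ²(P‖Q))^{n/2} ≤ √((μ₀ ⊗ Q^{⊗n})(E)) · exp((n/2)·χ²(P‖Q)). -/

import Mathlib

open MeasureTheory Real
open scoped ENNReal

private lemma lintegral_pi_prod' {𝒴 : Type*} [MeasurableSpace 𝒴] (μ : Measure 𝒴) [SigmaFinite μ] :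
    ∀ {n : ℕ} (f : Fin n → 𝒴 → ℝ≥0∞), (∀ i, Measurable (f i)) →
      ∫⁻ x : Fin n → 𝒴, ∏ i, f i (x i) ∂(Measure.pi fun _ => μ) = ∏ i, ∫⁻ y, f i y ∂μ := by
  intro n
  induction n with
  | zero => intro f _; simp
  | succ n ih =>
    intro f hf
    rw [← ((measurePreserving_piFinSuccAbove (fun _ : Fin (n + 1) => μ) 0).symm).lintegral_comp_emb
      (MeasurableEquiv.measurableEmbedding _)]
    simp_rw [MeasurableEquiv.piFinSuccAbove_symm_apply, Fin.insertNthEquiv, Equiv.coe_fn_mk,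
      Fin.insertNth_zero, Fin.prod_univ_succ, Fin.cons_zero, Fin.cons_succ, cast_eq]
    rw [lintegral_prod_mul (f := f 0) (g := fun y : Fin n → 𝒴 => ∏ x : Fin n, f x.succ (y x))
      (hf 0).aemeasurable
      ((Finset.measurable_prod _ fun j _ =>
        (hf j.succ).comp (measurable_pi_apply j)).aemeasurable)]
    rw [ih (fun j => f j.succ) (fun j => hf _)]

private lemma pi_withDensity_rnDeriv' {𝒴 : Type*} [MeasurableSpace 𝒴] (P Q : Measure 𝒴)
    [IsProbabilityMeasure P] [IsProbabilityMeasure Q] (hPQ : P ≪ Q) (n : ℕ) :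
    Measure.pi (fun _ : Fin n => P) =
      (Measure.pi fun _ : Fin n => Q).withDensity (fun y => ∏ i, P.rnDeriv Q (y i)) := by
  have hg : Measurable (P.rnDeriv Q) := Measure.measurable_rnDeriv P Q
  refine Measure.pi_eq fun s hs => ?_
  rw [withDensity_apply _ (MeasurableSet.univ_pi hs),
    ← lintegral_indicator (MeasurableSet.univ_pi hs)]
  have hpt : ∀ y : Fin n → 𝒴,
      (Set.pi Set.univ s).indicator (fun y => ∏ i, P.rnDeriv Q (y i)) y
        = ∏ i, (s i).indicator (P.rnDeriv Q) (y i) := by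
    intro y
    by_cases h : y ∈ Set.pi Set.univ s
    · rw [Set.indicator_of_mem h]
      exact Finset.prod_congr rfl fun i _ =>
        (Set.indicator_of_mem (h i (Set.mem_univ i)) _).symm
    · rw [Set.indicator_of_notMem h]
      rw [Set.mem_univ_pi] at h
      push_neg at h
      obtain ⟨i, hi⟩ := h
      exact (Finset.prod_eq_zero (Finset.mem_univ i) (Set.indicator_of_notMem hi _)).symm
  simp_rw [hpt]
  rw [lintegral_pi_prod' Q _ (fun i => hg.indicator (hs i))]
  refine Finset.prod_congr rfl fun i _ => ?_
  rw [lintegral_indicator (hs i), ← withDensity_apply _ (hs i),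
    Measure.withDensity_rnDeriv_eq P Q hPQ]


/-- **prefix-measurable χ² change of measure.**
Let `P ≪ Q` be probability measures on `𝒴` with `χ²(P‖Q) := ∫ (dP/dQ − 1)² dQ < ∞`
(finiteness expressed as integrability), and let `μ₀` be a probability measure on `Ω₀`.
Then for every `n ≥ 0` and every measurable `E ⊆ Ω₀ × 𝒴ⁿ`,
`(μ₀ ⊗ P^{⊗n})(E) ≤ √((μ₀ ⊗ Q^{⊗n})(E)) · (1 + χ²(P‖Q))^{n/2}
                  ≤ √((μ₀ ⊗ Q^{⊗n})(E)) · exp((n/2)·χ²(P‖Q))`. -/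
theorem stmt3_prefix_chisq_change_of_measure
    {𝒴 : Type*} [MeasurableSpace 𝒴] {Ω₀ : Type*} [MeasurableSpace Ω₀]
    (P Q : Measure 𝒴) [IsProbabilityMeasure P] [IsProbabilityMeasure Q]
    (μ₀ : Measure Ω₀) [IsProbabilityMeasure μ₀]
    (hPQ : P ≪ Q)
    (hχfin : Integrable (fun y => ((P.rnDeriv Q y).toReal - 1) ^ 2) Q)
    (n : ℕ) (E : Set (Ω₀ × (Fin n → 𝒴))) (hE : MeasurableSet E) :
    ((μ₀.prod (Measure.pi fun _ : Fin n => P)) E).toReal ≤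
        Real.sqrt ((μ₀.prod (Measure.pi fun _ : Fin n => Q)) E).toReal *
          (1 + ∫ y, ((P.rnDeriv Q y).toReal - 1) ^ 2 ∂Q) ^ ((n : ℝ) / 2) ∧
      Real.sqrt ((μ₀.prod (Measure.pi fun _ : Fin n => Q)) E).toReal *
          (1 + ∫ y, ((P.rnDeriv Q y).toReal - 1) ^ 2 ∂Q) ^ ((n : ℝ) / 2) ≤
        Real.sqrt ((μ₀.prod (Measure.pi fun _ : Fin n => Q)) E).toReal *
          Real.exp ((n : ℝ) / 2 * ∫ y, ((P.rnDeriv Q y).toReal - 1) ^ 2 ∂Q) := by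
  classical
  have hg : Measurable (P.rnDeriv Q) := Measure.measurable_rnDeriv P Q
  set g : 𝒴 → ℝ≥0∞ := P.rnDeriv Q with hgdef
  set χ : ℝ := ∫ y, ((g y).toReal - 1) ^ 2 ∂Q with hχdef
  have hχ0 : 0 ≤ χ := integral_nonneg fun y => sq_nonneg _
  set ρ : Ω₀ × (Fin n → 𝒴) → ℝ≥0∞ := fun p => ∏ i, g (p.2 i) with hρdef
  have hρm : Measurable ρ :=
    Finset.measurable_prod _ fun i _ => hg.comp ((measurable_pi_apply i).comp measurable_snd)
  have hGm : Measurable (fun y : Fin n → 𝒴 => ∏ i, g (y i)) :=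
    Finset.measurable_prod _ fun i _ => hg.comp (measurable_pi_apply i)
  -- product measure equality
  have hprod : μ₀.prod (Measure.pi fun _ : Fin n => P)
      = (μ₀.prod (Measure.pi fun _ : Fin n => Q)).withDensity ρ := by
    refine Measure.prod_eq fun s t hs ht => ?_
    rw [withDensity_apply _ (hs.prod ht), ← lintegral_indicator (hs.prod ht)]
    have hpt : ∀ p : Ω₀ × (Fin n → 𝒴), (s ×ˢ t).indicator ρ p
        = s.indicator (1 : Ω₀ → ℝ≥0∞) p.1
          * t.indicator (fun y => ∏ i, g (y i)) p.2 := by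
      rintro ⟨ω, y⟩
      by_cases h1 : ω ∈ s <;> by_cases h2 : y ∈ t <;>
        simp [Set.indicator_apply, h1, h2, hρdef]
    simp_rw [hpt]
    rw [lintegral_prod_mul (f := s.indicator (1 : Ω₀ → ℝ≥0∞))
        (g := t.indicator fun y => ∏ i, g (y i))
        (measurable_one.indicator hs).aemeasurable ((hGm.indicator ht).aemeasurable)]
    rw [lintegral_indicator_one hs, lintegral_indicator ht, ← withDensity_apply _ ht,
      ← pi_withDensity_rnDeriv' P Q hPQ n]
  -- the second moment
  set C : ℝ≥0∞ := ∫⁻ y, g y ^ 2 ∂Q with hCdef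
  have hit : Integrable (fun y => (g y).toReal) Q := Measure.integrable_toReal_rnDeriv
  have heq : (fun y => (g y).toReal ^ 2)
      = fun y => ((g y).toReal - 1) ^ 2 + (2 * (g y).toReal - 1) := by
    funext y; ring
  have hint2 : Integrable (fun y => (2 : ℝ) * (g y).toReal - 1) Q :=
    (hit.const_mul 2).sub (integrable_const 1)
  have hint : Integrable (fun y => (g y).toReal ^ 2) Q := by
    rw [heq]; exact hχfin.add hint2
  have hC : C = ENNReal.ofReal (1 + χ) := by
    have hae : ∀ᵐ y ∂Q, g y ^ 2 = ENNReal.ofReal ((g y).toReal ^ 2) := by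
      filter_upwards [Measure.rnDeriv_lt_top P Q] with y hy
      rw [ENNReal.ofReal_pow ENNReal.toReal_nonneg, ENNReal.ofReal_toReal hy.ne]
    rw [hCdef, lintegral_congr_ae hae,
      ← ofReal_integral_eq_lintegral_ofReal hint (ae_of_all _ fun y => sq_nonneg _)]
    congr 1
    rw [heq, integral_add hχfin hint2, integral_sub (hit.const_mul 2) (integrable_const 1),
      integral_const_mul, Measure.integral_toReal_rnDeriv hPQ, integral_const]
    rw [← hχdef]
    simp [measure_univ]
    ring
  set A : ℝ≥0∞ := (μ₀.prod (Measure.pi fun _ : Fin n => Q)) E with hAdef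
  have h22 : (2 : ℝ).HolderConjugate 2 := Real.holderConjugate_iff.mpr ⟨one_lt_two, by norm_num⟩
  have hPE : (μ₀.prod (Measure.pi fun _ : Fin n => P)) E
      = ∫⁻ p, (E.indicator (1 : Ω₀ × (Fin n → 𝒴) → ℝ≥0∞) * ρ) p
          ∂(μ₀.prod (Measure.pi fun _ : Fin n => Q)) := by
    rw [hprod, withDensity_apply _ hE, ← lintegral_indicator hE]
    refine lintegral_congr fun p => ?_
    by_cases h : p ∈ E <;> simp [h]
  have hCS := ENNReal.lintegral_mul_le_Lp_mul_Lq (μ₀.prod (Measure.pi fun _ : Fin n => Q)) h22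
    (measurable_one.indicator hE).aemeasurable hρm.aemeasurable
  rw [← hPE] at hCS
  have hfac1 : ∫⁻ p, (E.indicator (1 : Ω₀ × (Fin n → 𝒴) → ℝ≥0∞) p) ^ (2 : ℝ)
      ∂(μ₀.prod (Measure.pi fun _ : Fin n => Q)) = A := by
    have h1 : ∀ p, (E.indicator (1 : Ω₀ × (Fin n → 𝒴) → ℝ≥0∞) p) ^ (2 : ℝ)
        = E.indicator (1 : Ω₀ × (Fin n → 𝒴) → ℝ≥0∞) p := by
      intro p; by_cases h : p ∈ E <;> simp [h]
    simp_rw [h1]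
    rw [lintegral_indicator_one hE]
  have hfac2 : ∫⁻ p, (ρ p) ^ (2 : ℝ)
      ∂(μ₀.prod (Measure.pi fun _ : Fin n => Q)) = C ^ n := by
    have hpt : ∀ p : Ω₀ × (Fin n → 𝒴),
        (ρ p) ^ (2 : ℝ) = (fun _ : Ω₀ => (1 : ℝ≥0∞)) p.1
          * (fun y : Fin n → 𝒴 => ∏ i, g (y i) ^ 2) p.2 := by
      intro p
      simp only [hρdef, one_mul]
      rw [show (2 : ℝ) = ((2 : ℕ) : ℝ) by norm_num, ENNReal.rpow_natCast, ← Finset.prod_pow]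
    rw [lintegral_congr hpt]
    rw [lintegral_prod_mul (f := fun _ : Ω₀ => (1 : ℝ≥0∞))
        (g := fun y : Fin n → 𝒴 => ∏ i, g (y i) ^ 2) aemeasurable_const
        (Finset.measurable_prod _ fun i _ =>
          (hg.pow_const 2).comp (measurable_pi_apply i)).aemeasurable]
    rw [lintegral_pi_prod' Q (fun _ => fun y => g y ^ 2) (fun _ => hg.pow_const 2)]
    simp [measure_univ]
    rfl
  rw [hfac1, hfac2] at hCS
  have hCn : (C ^ n) ^ (1 / 2 : ℝ) = ENNReal.ofReal (1 + χ) ^ ((n : ℝ) / 2) := by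
    rw [hC, ← ENNReal.rpow_natCast _ n, ← ENNReal.rpow_mul]
    congr 1
    ring
  rw [hCn] at hCS
  have hA_ne : A ≠ ⊤ := hAdef ▸ measure_ne_top _ _
  have hRfin : A ^ (1 / 2 : ℝ) * ENNReal.ofReal (1 + χ) ^ ((n : ℝ) / 2) ≠ ⊤ :=
    ENNReal.mul_ne_top (ENNReal.rpow_ne_top_of_nonneg (by norm_num) hA_ne)
      (ENNReal.rpow_ne_top_of_nonneg (by positivity) ENNReal.ofReal_ne_top)
  have hmono := ENNReal.toReal_mono hRfin hCS
  rw [ENNReal.toReal_mul, ← ENNReal.toReal_rpow, ← ENNReal.toReal_rpow,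
    ENNReal.toReal_ofReal (by positivity), ← Real.sqrt_eq_rpow] at hmono
  constructor
  · exact hmono
  · refine mul_le_mul_of_nonneg_left ?_ (Real.sqrt_nonneg _)
    calc (1 + χ) ^ ((n : ℝ) / 2) ≤ Real.exp χ ^ ((n : ℝ) / 2) :=
        Real.rpow_le_rpow (by positivity) (by linarith [Real.add_one_le_exp χ]) (by positivity)
      _ = Real.exp ((n : ℝ) / 2 * χ) := by rw [← Real.exp_mul, mul_comm χ ((n : ℝ) / 2)]
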